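/- Let K be a henselian valued field such that both K and its residue field k have characteristic zero. Then the valuation ring O contains a subfield F that is maximal among subfields of O, and the residue map π: O → k restricts to an isomorphism from F onto k. -/

import Mathlib

open Polynomial

/-- If `K` is a henselian valued field and both `K` and its residue field `k`
have characteristic zero, then the valuation ring contains a subfield `F` maximal
among subfields of the valuation ring, and the residue map `π` restricts to an
isomorphism (a bijective ring map) from `F` onto `k`. -/
theorem stmt3 {K : Type*} [Field K] [CharZero K]
    {Γ₀ : Type*} [LinearOrderedCommGroupWithZero Γ₀]
    (v : Valuation K Γ₀) (hv : Function.Surjective v)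
    {k : Type*} [Field k] [CharZero k]
    (π : v.integer →+* k) (hπ : Function.Surjective π)
    (hker : ∀ x : v.integer, π x = 0 ↔ v (x : K) < 1)
    (hhens : ∀ (P : Polynomial v.integer) (α : k),
      (P.map π).eval α = 0 → (Polynomial.derivative (P.map π)).eval α ≠ 0 →
      ∃ β : v.integer, π β = α ∧ P.eval β = 0) :
    ∃ (F : Subfield K) (hF : ∀ x ∈ F, x ∈ v.integer),
      (∀ F' : Subfield K, (∀ x ∈ F', x ∈ v.integer) → F ≤ F' → F' = F) ∧
      Function.Bijective (fun x : F => π ⟨(x : K), hF x x.2⟩) := by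
  classical
  -- nonzero rational integers have value 1
  have hint1 : ∀ n : ℤ, n ≠ 0 → v (n : K) = 1 := by
    intro n hn
    have hmem : ((n : K)) ∈ v.integer := intCast_mem v.integer n
    have heq : (⟨(n : K), hmem⟩ : v.integer) = (n : v.integer) := by
      ext; push_cast; ring
    have h1 : π ⟨(n : K), hmem⟩ ≠ 0 := by
      rw [heq, map_intCast]
      exact Int.cast_ne_zero.mpr hn
    have h2 : ¬ v ((n : K)) < 1 := fun h => h1 ((hker _).mpr h)
    exact le_antisymm ((v.mem_integer_iff _).mp hmem) (not_lt.mp h2)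
  -- Zorn's lemma: a maximal subfield contained in the valuation ring
  set S : Set (Subfield K) := {F | ∀ x ∈ F, x ∈ v.integer} with hSdef
  have hbot : Subfield.closure (∅ : Set K) ∈ S := by
    intro x hx
    rw [Subfield.mem_closure_iff] at hx
    obtain ⟨y, hy, z, hz, rfl⟩ := hx
    rw [Subring.closure_empty, Subring.mem_bot] at hy hz
    obtain ⟨m, rfl⟩ := hy
    obtain ⟨n, rfl⟩ := hz
    rcases eq_or_ne (n : K) 0 with h0 | h0
    · rw [h0, div_zero]; exact Subring.zero_mem _
    · have hn : n ≠ 0 := fun h => h0 (by rw [h, Int.cast_zero])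
      rw [v.mem_integer_iff, map_div₀, hint1 n hn, div_one]
      exact (v.mem_integer_iff _).mp (intCast_mem v.integer m)
  obtain ⟨F, -, hmax⟩ := zorn_le_nonempty₀ S (fun c hc hchain y hy => by
      refine ⟨sSup c, ?_, fun z hz => le_sSup hz⟩
      intro x hx
      rw [Subfield.mem_sSup_of_directedOn ⟨y, hy⟩ hchain.directedOn] at hx
      obtain ⟨G, hG, hxG⟩ := hx
      exact hc hG x hxG) _ hbot
  have hFS : ∀ x ∈ F, x ∈ v.integer := hmax.1
  -- the canonical homs
  set incl : F →+* v.integer := F.subtype.codRestrict v.integer (fun x => hFS x.1 x.2) with hincl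
  set f : F →+* k := π.comp incl with hf
  have hinclcoe : ∀ x : F, ((incl x : v.integer) : K) = (x : K) := fun x => rfl
  have hOincl : (v.integer.subtype).comp incl = F.subtype := by ext x; rfl
  have halgF : algebraMap F K = F.subtype := rfl
  -- nonzero elements of F have value 1
  have hval1 : ∀ x : F, x ≠ 0 → v (x : K) = 1 := by
    intro x hx
    have hxne : (x : K) ≠ 0 := fun h => hx (Subtype.ext h)
    have hle : v (x : K) ≤ 1 := (v.mem_integer_iff _).mp (hFS x.1 x.2)
    have hinv : v ((x : K)⁻¹) ≤ 1 :=
      (v.mem_integer_iff _).mp (hFS _ (F.inv_mem x.2))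
    have h1 : (1 : Γ₀) ≤ v (x : K) := by
      calc (1 : Γ₀) = v (x : K) * v ((x : K)⁻¹) := by
            rw [← map_mul, mul_inv_cancel₀ hxne, map_one]
        _ ≤ v (x : K) * 1 := mul_le_mul_right hinv _
        _ = v (x : K) := mul_one _
    exact le_antisymm hle h1
  -- f is injective
  have hfinj : Function.Injective f := by
    intro a b hab
    by_contra hne
    have hd : a - b ≠ 0 := sub_ne_zero.mpr hne
    have h0 : f (a - b) = 0 := by rw [map_sub, hab, sub_self]
    have hv1 : v ((incl (a - b) : v.integer) : K) < 1 := (hker _).mp h0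
    rw [hinclcoe, hval1 _ hd] at hv1
    exact lt_irrefl _ hv1
  -- the adjunction of an integral element stays in the valuation ring
  have hadj : ∀ (b : v.integer) (x : K),
      x ∈ Algebra.adjoin F ({(b : K)} : Set K) → x ∈ v.integer := by
    intro b x hx
    rw [Algebra.adjoin_singleton_eq_range_aeval, AlgHom.mem_range] at hx
    obtain ⟨p, hp⟩ := hx
    have heq : Polynomial.aeval (b : K) p = ((Polynomial.eval₂ incl b p : v.integer) : K) := by
      calc Polynomial.aeval (b : K) p
          = Polynomial.eval₂ ((v.integer.subtype).comp incl) (v.integer.subtype b) p := by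
            rw [Polynomial.aeval_def, hOincl]; rfl
        _ = ((Polynomial.eval₂ incl b p : v.integer) : K) :=
            (Polynomial.hom_eval₂ p incl v.integer.subtype b).symm
    rw [← hp, heq]
    exact Subtype.coe_prop _
  -- pushing polynomial evaluation through π
  have hπeval : ∀ (b : v.integer) (p : Polynomial F),
      π (Polynomial.eval₂ incl b p) = Polynomial.eval₂ f (π b) p := by
    intro b p
    rw [Polynomial.hom_eval₂]
  -- surjectivity of f
  have hfsurj : ∀ α : k, ∃ x : F, f x = α := by
    intro α
    by_cases halg : ∃ p : Polynomial F, p ≠ 0 ∧ Polynomial.eval₂ f α p = 0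
    · -- algebraic case: use Hensel's lemma
      obtain ⟨p, hp0, hpα⟩ := halg
      set E := f.fieldRange with hE
      set e' : F →+* E := f.rangeRestrictField with he'
      have hfe : ∀ x : F, ((e' x : k)) = f x := fun x => f.coe_rangeRestrictField x
      have he'inj : Function.Injective e' := by
        intro a b hab
        apply hfinj
        rw [← hfe a, ← hfe b, hab]
      have he'surj : Function.Surjective e' := by
        rintro ⟨y, hy⟩
        rw [RingHom.mem_fieldRange] at hy
        obtain ⟨x, hx⟩ := hy
        exact ⟨x, Subtype.ext (by rw [hfe, hx])⟩
      set e : F ≃+* E := RingEquiv.ofBijective e' ⟨he'inj, he'surj⟩ with he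
      have hsubE : (algebraMap E k) = E.subtype := rfl
      have hcompE : (E.subtype).comp e' = f := by ext x; exact hfe x
      have halgE : IsIntegral E α := by
        apply IsAlgebraic.isIntegral
        refine ⟨p.map e', ?_, ?_⟩
        · exact (Polynomial.map_ne_zero_iff he'inj).mpr hp0
        · rw [Polynomial.aeval_def, Polynomial.eval₂_map, hsubE, hcompE, hpα]
      set μ := minpoly E α with hμ
      have hμsep : μ.Separable := (minpoly.irreducible halgE).separable
      have hμ0 : Polynomial.aeval α μ = 0 := minpoly.aeval E α
      have hμder : Polynomial.aeval α (Polynomial.derivative μ) ≠ 0 :=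
        hμsep.aeval_derivative_ne_zero hμ0
      set j : E →+* v.integer := incl.comp (e.symm : E ≃+* F).toRingHom with hj
      have hπj : π.comp j = E.subtype := by
        ext y
        show f (e.symm y) = (y : k)
        rw [← hfe (e.symm y)]
        exact congrArg _ (e.apply_symm_apply y)
      set P := μ.map j with hP
      have hPπ : P.map π = μ.map E.subtype := by
        rw [hP, Polynomial.map_map, hπj]
      have h1 : (P.map π).eval α = 0 := by
        rw [hPπ, Polynomial.eval_map, ← hsubE, ← Polynomial.aeval_def, hμ0]
      have h2 : (Polynomial.derivative (P.map π)).eval α ≠ 0 := by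
        rw [hPπ, Polynomial.derivative_map, Polynomial.eval_map, ← hsubE,
          ← Polynomial.aeval_def]
        exact hμder
      obtain ⟨β, hβ1, hβ2⟩ := hhens P α h1 h2
      have hβint : IsIntegral F ((β : K)) := by
        refine ⟨μ.map (e.symm : E ≃+* F).toRingHom, (minpoly.monic halgE).map _, ?_⟩
        rw [Polynomial.eval₂_map]
        have hcomp : ((algebraMap F K).comp (e.symm : E ≃+* F).toRingHom) =
            (v.integer.subtype).comp j := by
          rw [halgF, ← hOincl, hj, RingHom.comp_assoc]
        rw [hcomp]
        have : Polynomial.eval₂ ((v.integer.subtype).comp j) ((β : K)) μ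
            = v.integer.subtype (Polynomial.eval₂ j β μ) :=
          (Polynomial.hom_eval₂ μ j v.integer.subtype β).symm
        rw [this]
        have : Polynomial.eval₂ j β μ = P.eval β := (Polynomial.eval_map j β).symm
        rw [this, hβ2, map_zero]
      have hβmem : (β : K) ∈ F := by
        have hIF := IntermediateField.adjoin_simple_toSubalgebra_of_isAlgebraic hβint.isAlgebraic
        set F' := (IntermediateField.adjoin F {(β : K)}).toSubfield with hF'
        have hF'S : F' ∈ S := by
          intro x hx
          apply hadj β x
          have hx2 : x ∈ (IntermediateField.adjoin F {(β : K)}).toSubalgebra := by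
            rw [IntermediateField.mem_toSubalgebra]
            exact ((IntermediateField.adjoin F {(β : K)}).mem_toSubfield x).mp hx
          rwa [hIF] at hx2
        have hFle : F ≤ F' := by
          intro x hx
          have hmem := (IntermediateField.adjoin F {(β : K)}).algebraMap_mem ⟨x, hx⟩
          exact ((IntermediateField.adjoin F {(β : K)}).mem_toSubfield x).mpr hmem
        have hle := hmax.2 hF'S hFle
        have hβF' : (β : K) ∈ F' :=
          ((IntermediateField.adjoin F {(β : K)}).mem_toSubfield _).mpr
            (IntermediateField.mem_adjoin_simple_self F (β : K))
        exact hle hβF'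
      refine ⟨⟨(β : K), hβmem⟩, ?_⟩
      have hq : incl ⟨(β : K), hβmem⟩ = β := Subtype.ext rfl
      rw [hf, RingHom.comp_apply, hq, hβ1]
    · -- transcendental case: adjoin a lift of α to F, contradicting maximality
      push_neg at halg
      obtain ⟨a, ha⟩ := hπ α
      set F' := Subfield.closure ((F : Set K) ∪ {(a : K)}) with hF'
      have hFle : F ≤ F' := fun x hx => Subfield.subset_closure (Or.inl hx)
      have haF' : (a : K) ∈ F' := Subfield.subset_closure (Or.inr rfl)
      have hsub : ∀ w ∈ Subring.closure ((F : Set K) ∪ {(a : K)}),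
          w ∈ v.integer ∧ (w ≠ 0 → v w = 1) := by
        intro w hw
        have hle' : Subring.closure ((F : Set K) ∪ {(a : K)}) ≤
            (Algebra.adjoin F ({(a : K)} : Set K)).toSubring := by
          apply Subring.closure_le.mpr
          rintro t (ht | ht)
          · exact (Algebra.adjoin F ({(a : K)} : Set K)).algebraMap_mem ⟨t, ht⟩
          · exact Algebra.subset_adjoin ht
        have hw' : w ∈ Algebra.adjoin F ({(a : K)} : Set K) := hle' hw
        have hwO : w ∈ v.integer := hadj a w hw'
        rw [Algebra.adjoin_singleton_eq_range_aeval, AlgHom.mem_range] at hw'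
        obtain ⟨p, hp⟩ := hw'
        have heq : w = ((Polynomial.eval₂ incl a p : v.integer) : K) := by
          rw [← hp]
          calc Polynomial.aeval ((a : K)) p
              = Polynomial.eval₂ ((v.integer.subtype).comp incl) (v.integer.subtype a) p := by
                rw [Polynomial.aeval_def, hOincl]; rfl
            _ = ((Polynomial.eval₂ incl a p : v.integer) : K) :=
                (Polynomial.hom_eval₂ p incl v.integer.subtype a).symm
        refine ⟨hwO, fun hw0 => ?_⟩
        have hple : v w ≤ 1 := (v.mem_integer_iff _).mp hwO
        have hpne : p ≠ 0 := by
          rintro rfl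
          rw [map_zero] at hp
          exact hw0 hp.symm
        by_contra hlt'
        have hlt : v w < 1 := lt_of_le_of_ne hple hlt'
        have hπ0 : π (Polynomial.eval₂ incl a p) = 0 := by
          rw [hker]
          rw [← heq]
          exact hlt
        rw [hπeval, ha] at hπ0
        exact halg p hpne hπ0
      have hF'S : F' ∈ S := by
        intro x hx
        rw [hF', Subfield.mem_closure_iff] at hx
        obtain ⟨y, hy, z, hz, rfl⟩ := hx
        rcases eq_or_ne z 0 with rfl | hz0
        · rw [div_zero]; exact Subring.zero_mem _
        · rw [v.mem_integer_iff, map_div₀, (hsub z hz).2 hz0, div_one]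
          exact (v.mem_integer_iff _).mp (hsub y hy).1
      have hle := hmax.2 hF'S hFle
      refine ⟨⟨(a : K), hle haF'⟩, ?_⟩
      have hq : incl ⟨(a : K), hle haF'⟩ = a := Subtype.ext rfl
      rw [hf, RingHom.comp_apply, hq, ha]
  exact ⟨F, hFS, fun F' h1 h2 => le_antisymm (hmax.2 h1 h2) h2,
    hfinj, fun α => hfsurj α⟩
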